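/- arXiv:0912.2499 — 2 statements merged into one kernel-verified Lean document; each statement's English description precedes it below -/
import Mathlib

section
/- Let N ≥ 1, let ε > 0 be real and let Y be an arbitrary N×N complex matrix. Let (Y*Y + ε²I)^{1/2} and (YY* + ε²I)^{1/2} denote the positive definite square roots, where Y* is the conjugate transpose. Then the 2N×2N block matrix F̃ = [[ (Y*Y + ε²I)^{-1/2}, 0 ], [ 0, (YY* + ε²I)^{-1/2} ]] · [[ Y*, −εI ], [ εI, Y ]] is unitary and has determinant 1, i.e. F̃ ∈ SU(2N). -/
open MeasureTheory ProbabilityTheory Matrix Filter Topology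
open scoped ComplexConjugate ComplexOrder

noncomputable section

/-- The spectral (operator) norm of a square complex matrix. -/
def specNorm {n : Type*} [Fintype n] [DecidableEq n] (M : Matrix n n ℂ) : ℝ :=
  ‖Matrix.toEuclideanCLM (𝕜 := ℂ) (n := n) M‖

/-- The smallest singular value of a square complex matrix. -/
def leastSingular {n : Type*} [Fintype n] [DecidableEq n] (M : Matrix n n ℂ) : ℝ :=
  ⨅ v : {v : EuclideanSpace ℂ n // ‖v‖ = 1},
    ‖Matrix.toEuclideanCLM (𝕜 := ℂ) (n := n) M v.1‖

/-- The 2×2 matrix representation of the quaternion `a + b·j`, encoded as the pair `(a, b)`. -/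
def qmat (p : ℂ × ℂ) : Matrix (Fin 2) (Fin 2) ℂ :=
  !![p.1, Complex.I * p.2; Complex.I * conj p.2, conj p.1]

/-- The quaternion norm `|a + b·j| = sqrt(|a|² + |b|²)`. -/
def qnorm (p : ℂ × ℂ) : ℝ := Real.sqrt (‖p.1‖ ^ 2 + ‖p.2‖ ^ 2)

/-- Quaternion multiplication: `(a + bj)(c + dj) = (ac − b·conj d) + (ad + b·conj c)·j`. -/
def qmul (p q : ℂ × ℂ) : ℂ × ℂ :=
  (p.1 * q.1 - p.2 * conj q.2, p.1 * q.2 + p.2 * conj q.1)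

/-- Quaternion inverse. -/
def qinv (p : ℂ × ℂ) : ℂ × ℂ :=
  (conj p.1 / ((‖p.1‖ ^ 2 + ‖p.2‖ ^ 2 : ℝ) : ℂ),
   -p.2 / ((‖p.1‖ ^ 2 + ‖p.2‖ ^ 2 : ℝ) : ℂ))

/-- The elementwise product of quaternions: `(a + bj)·(c + dj) = ac + bd·j`. -/
def qdot (p q : ℂ × ℂ) : ℂ × ℂ := (p.1 * q.1, p.2 * q.2)

/-- The `2N×2N` doubling of an `N×N` matrix `X`, whose `(i,j)`-th `2×2` block is
`[[X i j, 0], [0, conj (X j i)]]`. -/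
def dbl {N : ℕ} (X : Matrix (Fin N) (Fin N) ℂ) :
    Matrix (Fin N × Fin 2) (Fin N × Fin 2) ℂ :=
  Matrix.of fun r s =>
    if r.2 = 0 ∧ s.2 = 0 then X r.1 s.1
    else if r.2 = 1 ∧ s.2 = 1 then conj (X s.1 r.1) else 0

/-- The matrix `𝐪 ⊗ I_N` of a quaternion `q` acting on `2N×2N` matrices. -/
def qId {N : ℕ} (p : ℂ × ℂ) : Matrix (Fin N × Fin 2) (Fin N × Fin 2) ℂ :=
  Matrix.of fun r s => if r.1 = s.1 then qmat p r.2 s.2 else 0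

/-- The `2N×2N` matrix `𝐙𝐣 = (dbl Z) · (𝐣 ⊗ I_N)`, whose `(i,j)`-th `2×2` block is
`[[0, i·Z i j], [i·conj (Z j i), 0]]`. -/
def dblJ {N : ℕ} (Z : Matrix (Fin N) (Fin N) ℂ) :
    Matrix (Fin N × Fin 2) (Fin N × Fin 2) ℂ :=
  Matrix.of fun r s =>
    if r.2 = 0 ∧ s.2 = 1 then Complex.I * Z r.1 s.1
    else if r.2 = 1 ∧ s.2 = 0 then Complex.I * conj (Z s.1 r.1) else 0

/-- The `(i,j)`-th `2×2` block of a `2N×2N` matrix. -/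
def blk {N : ℕ} (M : Matrix (Fin N × Fin 2) (Fin N × Fin 2) ℂ) (i j : Fin N) :
    Matrix (Fin 2) (Fin 2) ℂ :=
  Matrix.of fun s t => M (i, s) (j, t)

/-- The quaternionic Green's function `𝒢(p; X) = α + βj`: with
`𝐌 = (1/N)·Σ_i ((dbl X − 𝐩 ⊗ I_N)⁻¹)_{ii}` the average of the diagonal `2×2` blocks of
the resolvent, `α = 𝐌 0 0` and `β = −i·(𝐌 0 1)`. -/
def qGreen {N : ℕ} (p : ℂ × ℂ) (X : Matrix (Fin N) (Fin N) ℂ) : ℂ × ℂ :=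
  let R : Matrix (Fin N × Fin 2) (Fin N × Fin 2) ℂ := (dbl X - qId p)⁻¹
  ((N : ℂ)⁻¹ * ∑ i : Fin N, R (i, 0) (i, 0),
   -Complex.I * ((N : ℂ)⁻¹ * ∑ i : Fin N, R (i, 0) (i, 1)))

/-- The normalised `N×N` random matrix `A_N` with entries `ξ i j / √N`. -/
def rmat {Ω : Type*} (ξ : ℕ → ℕ → Ω → ℂ) (N : ℕ) (ω : Ω) :
    Matrix (Fin N) (Fin N) ℂ :=
  Matrix.of fun i j : Fin N => ξ (i : ℕ) (j : ℕ) ω / ((Real.sqrt N : ℝ) : ℂ)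

/-- The entrywise expectation (Bochner integral) of a random matrix. -/
def Emat {Ω : Type*} [MeasurableSpace Ω] (μ : Measure Ω) {n m : Type*}
    (f : Ω → Matrix n m ℂ) : Matrix n m ℂ :=
  Matrix.of fun i j => ∫ ω, f ω i j ∂μ

/-- The entrywise expectation of a random quaternion. -/
def Equat {Ω : Type*} [MeasurableSpace Ω] (μ : Measure Ω) (f : Ω → ℂ × ℂ) : ℂ × ℂ :=
  (∫ ω, (f ω).1 ∂μ, ∫ ω, (f ω).2 ∂μ)

/-- The standard complex Gaussian measure on `ℂ`, with density `π⁻¹·exp(−|z|²)`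
with respect to Lebesgue measure. -/
def gaussianC : Measure ℂ :=
  MeasureTheory.volume.withDensity fun z =>
    ENNReal.ofReal (Real.exp (-‖z‖ ^ 2) / Real.pi)

/-- `A` and `B` are independent `N×N` random matrices whose entries are i.i.d. standard
complex Gaussian: the joint law of all the entries of `A` and `B` is the corresponding
product of standard complex Gaussian measures. -/
structure IsGaussianPair {Ω : Type*} [MeasurableSpace Ω] (μ : Measure Ω) {N : ℕ}
    (A B : Ω → Matrix (Fin N) (Fin N) ℂ) : Prop where
  measA : ∀ i j, Measurable fun ω => A ω i j
  measB : ∀ i j, Measurable fun ω => B ω i j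
  law : Measure.map (fun ω =>
      Sum.elim (fun ij : Fin N × Fin N => A ω ij.1 ij.2)
        (fun ij : Fin N × Fin N => B ω ij.1 ij.2)) μ
    = Measure.pi fun _ : (Fin N × Fin N) ⊕ (Fin N × Fin N) => gaussianC

/-- Assumptions A1–A4 of the paper on the infinite array `ξ`:
(A1) zero mean, (A2) unit variance, (A3) third absolute moments bounded by `Cξ`,
(A4) the pairs `(ξ i j, ξ j i)` over unordered pairs `{i,j}` are jointly independent,
and `E[ξ i j · ξ j i] = τ` for `i ≠ j`. -/
structure IsIIDArray {Ω : Type*} [MeasurableSpace Ω] (μ : Measure Ω)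
    (ξ : ℕ → ℕ → Ω → ℂ) (Cξ τ : ℝ) : Prop where
  meas : ∀ i j, Measurable (ξ i j)
  int1 : ∀ i j, Integrable (ξ i j) μ
  mean_zero : ∀ i j, ∫ ω, ξ i j ω ∂μ = 0
  int2 : ∀ i j, Integrable (fun ω => ‖ξ i j ω‖ ^ 2) μ
  var_one : ∀ i j, ∫ ω, ‖ξ i j ω‖ ^ 2 ∂μ = 1
  int3 : ∀ i j, Integrable (fun ω => ‖ξ i j ω‖ ^ 3) μ
  third_moment : ∀ i j, ∫ ω, ‖ξ i j ω‖ ^ 3 ∂μ ≤ Cξ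
  indep : iIndepFun
      (fun p : {p : ℕ × ℕ // p.1 ≤ p.2} => fun ω =>
        (ξ p.1.1 p.1.2 ω, ξ p.1.2 p.1.1 ω)) μ
  int_cov : ∀ i j, Integrable (fun ω => ξ i j ω * ξ j i ω) μ
  cov : ∀ i j, i ≠ j → ∫ ω, ξ i j ω * ξ j i ω ∂μ = (τ : ℂ)

end

private lemma fromBlocks_eq_one' {n m : Type*} {A : Matrix n n ℂ} {B : Matrix n m ℂ}
    {C : Matrix m n ℂ} {D : Matrix m m ℂ} [DecidableEq n] [DecidableEq m]
    (hA : A = 1) (hB : B = 0) (hC : C = 0) (hD : D = 1) :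
    Matrix.fromBlocks A B C D = 1 := by
  subst hA; subst hB; subst hC; subst hD; exact Matrix.fromBlocks_one

/-- **The normalised matrix Möbius transformation matrix is in SU(2N).**
If `S` and `T` are the positive definite square roots of `Yᴴ·Y + ε²·I` and `Y·Yᴴ + ε²·I`
respectively, then `F̃ = diag(S⁻¹, T⁻¹)·[[Yᴴ, −ε], [ε, Y]]` is unitary with determinant 1. -/
theorem mobius_matrix_special_unitary
    (N : ℕ) (hN : 1 ≤ N) (ε : ℝ) (hε : 0 < ε)
    (Y S T : Matrix (Fin N) (Fin N) ℂ)
    (hS : S.PosDef) (hT : T.PosDef)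
    (hS2 : S * S = Yᴴ * Y + ((ε : ℂ) ^ 2) • 1)
    (hT2 : T * T = Y * Yᴴ + ((ε : ℂ) ^ 2) • 1) :
    (Matrix.fromBlocks S⁻¹ 0 0 T⁻¹ *
        Matrix.fromBlocks Yᴴ (-((ε : ℂ) • (1 : Matrix (Fin N) (Fin N) ℂ)))
          ((ε : ℂ) • 1) Y)ᴴ *
      (Matrix.fromBlocks S⁻¹ 0 0 T⁻¹ *
        Matrix.fromBlocks Yᴴ (-((ε : ℂ) • (1 : Matrix (Fin N) (Fin N) ℂ)))
          ((ε : ℂ) • 1) Y) = 1 ∧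
    (Matrix.fromBlocks S⁻¹ 0 0 T⁻¹ *
        Matrix.fromBlocks Yᴴ (-((ε : ℂ) • (1 : Matrix (Fin N) (Fin N) ℂ)))
          ((ε : ℂ) • 1) Y) *
      (Matrix.fromBlocks S⁻¹ 0 0 T⁻¹ *
        Matrix.fromBlocks Yᴴ (-((ε : ℂ) • (1 : Matrix (Fin N) (Fin N) ℂ)))
          ((ε : ℂ) • 1) Y)ᴴ = 1 ∧
    (Matrix.fromBlocks S⁻¹ 0 0 T⁻¹ *
        Matrix.fromBlocks Yᴴ (-((ε : ℂ) • (1 : Matrix (Fin N) (Fin N) ℂ)))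
          ((ε : ℂ) • 1) Y).det = 1 := by
  
  classical
  have he0 : ((ε : ℂ)) ≠ 0 := by
    simpa using Complex.ofReal_ne_zero.mpr hε.ne'
  have hSdet : (0 : ℂ) < S.det := hS.det_pos
  have hTdet : (0 : ℂ) < T.det := hT.det_pos
  have hSu : IsUnit S.det := hSdet.ne'.isUnit
  have hTu : IsUnit T.det := hTdet.ne'.isUnit
  set e : ℂ := (ε : ℂ) with he
  set A : Matrix (Fin N) (Fin N) ℂ := Yᴴ * Y + (e ^ 2) • 1 with hA
  set B : Matrix (Fin N) (Fin N) ℂ := Y * Yᴴ + (e ^ 2) • 1 with hB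
  have hAu : IsUnit A.det := by
    rw [← hS2, Matrix.det_mul]; exact hSu.mul hSu
  have hBu : IsUnit B.det := by
    rw [← hT2, Matrix.det_mul]; exact hTu.mul hTu
  have hSinv : S⁻¹ * S⁻¹ = A⁻¹ := by rw [← Matrix.mul_inv_rev, hS2]
  have hTinv : T⁻¹ * T⁻¹ = B⁻¹ := by rw [← Matrix.mul_inv_rev, hT2]
  have hYA : Y * A = B * Y := by
    simp only [hA, hB, Matrix.mul_add, Matrix.add_mul, Matrix.mul_smul, Matrix.smul_mul,
      Matrix.mul_one, Matrix.one_mul, Matrix.mul_assoc]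
  have hYAinv : Y * A⁻¹ = B⁻¹ * Y := by
    have h1 : B * Y * A⁻¹ = Y := by
      rw [← hYA, Matrix.mul_assoc, Matrix.mul_nonsing_inv _ hAu, Matrix.mul_one]
    calc Y * A⁻¹ = B⁻¹ * B * (Y * A⁻¹) := by
          rw [Matrix.nonsing_inv_mul _ hBu, Matrix.one_mul]
      _ = B⁻¹ * Y := by rw [Matrix.mul_assoc, ← Matrix.mul_assoc B Y A⁻¹, h1]
  have hAH : Aᴴ = A := by
    simp [hA, Matrix.conjTranspose_add, Matrix.conjTranspose_smul, Matrix.conjTranspose_mul,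
      he, Complex.star_def, Complex.conj_ofReal, map_pow]
  have hBH : Bᴴ = B := by
    simp [hB, Matrix.conjTranspose_add, Matrix.conjTranspose_smul, Matrix.conjTranspose_mul,
      he, Complex.star_def, Complex.conj_ofReal, map_pow]
  have hYHB : Yᴴ * B = A * Yᴴ := by
    have := congrArg Matrix.conjTranspose hYA
    simpa [Matrix.conjTranspose_mul, hAH, hBH] using this.symm
  have hYHBinv : Yᴴ * B⁻¹ = A⁻¹ * Yᴴ := by
    have h1 : A * Yᴴ * B⁻¹ = Yᴴ := by
      rw [← hYHB, Matrix.mul_assoc, Matrix.mul_nonsing_inv _ hBu, Matrix.mul_one]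
    calc Yᴴ * B⁻¹ = A⁻¹ * A * (Yᴴ * B⁻¹) := by
          rw [Matrix.nonsing_inv_mul _ hAu, Matrix.one_mul]
      _ = A⁻¹ * Yᴴ := by rw [Matrix.mul_assoc, ← Matrix.mul_assoc A Yᴴ B⁻¹, h1]
  set D : Matrix (Fin N ⊕ Fin N) (Fin N ⊕ Fin N) ℂ := Matrix.fromBlocks S⁻¹ 0 0 T⁻¹ with hD
  set G : Matrix (Fin N ⊕ Fin N) (Fin N ⊕ Fin N) ℂ :=
    Matrix.fromBlocks Yᴴ (-(e • (1 : Matrix (Fin N) (Fin N) ℂ))) (e • 1) Y with hG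
  have hDH : Dᴴ = D := by
    rw [hD, Matrix.fromBlocks_conjTranspose]
    simp [Matrix.conjTranspose_nonsing_inv, hS.isHermitian.eq, hT.isHermitian.eq]
  have hGH : Gᴴ = Matrix.fromBlocks Y (e • 1) (-(e • 1)) Yᴴ := by
    rw [hG, Matrix.fromBlocks_conjTranspose]
    simp [Matrix.conjTranspose_smul, he, Complex.star_def, Complex.conj_ofReal]
  have hDD : Dᴴ * D = Matrix.fromBlocks A⁻¹ 0 0 B⁻¹ := by
    rw [hDH, hD, Matrix.fromBlocks_multiply]
    simp [hSinv, hTinv]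
  -- the key unitarity computation
  have key : (D * G)ᴴ * (D * G) = 1 := by
    rw [Matrix.conjTranspose_mul, Matrix.mul_assoc, ← Matrix.mul_assoc Dᴴ D G, hDD, hGH, hG,
      Matrix.fromBlocks_multiply, Matrix.fromBlocks_multiply]
    apply fromBlocks_eq_one'
    · simp only [Matrix.zero_mul, Matrix.mul_zero, smul_zero, neg_zero, add_zero, zero_add, Matrix.smul_mul,
        Matrix.mul_smul, Matrix.one_mul, Matrix.mul_one, smul_smul, ← Matrix.mul_assoc]
      rw [hYAinv, Matrix.mul_assoc]
      conv_rhs => rw [← Matrix.nonsing_inv_mul B hBu]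
      rw [hB, Matrix.mul_add]
      simp [Matrix.mul_smul, smul_smul, sq]
    · simp only [Matrix.zero_mul, Matrix.mul_zero, smul_zero, neg_zero, add_zero, zero_add, Matrix.smul_mul,
        Matrix.mul_smul, Matrix.one_mul, Matrix.mul_one, Matrix.mul_neg, Matrix.neg_mul,
        smul_neg, ← Matrix.mul_assoc]
      rw [hYAinv]
      exact neg_add_cancel _
    · simp only [Matrix.zero_mul, Matrix.mul_zero, smul_zero, neg_zero, add_zero, zero_add, Matrix.smul_mul,
        Matrix.mul_smul, Matrix.one_mul, Matrix.mul_one, Matrix.mul_neg, Matrix.neg_mul,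
        smul_neg, ← Matrix.mul_assoc]
      rw [hYHBinv]
      exact neg_add_cancel _
    · simp only [Matrix.zero_mul, Matrix.mul_zero, smul_zero, neg_zero, add_zero, zero_add, Matrix.smul_mul,
        Matrix.mul_smul, Matrix.one_mul, Matrix.mul_one, Matrix.mul_neg, Matrix.neg_mul,
        smul_neg, neg_neg, smul_smul, ← Matrix.mul_assoc]
      rw [hYHBinv, Matrix.mul_assoc]
      conv_rhs => rw [← Matrix.nonsing_inv_mul A hAu]
      rw [hA, Matrix.mul_add]
      simp [Matrix.mul_smul, smul_smul, sq, add_comm]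
  refine ⟨key, mul_eq_one_comm.mp key, ?_⟩
  -- determinant computation
  have hDdet : D.det = S.det⁻¹ * T.det⁻¹ := by
    rw [hD, Matrix.det_fromBlocks_zero₁₂, Matrix.det_nonsing_inv, Matrix.det_nonsing_inv,
      Ring.inverse_eq_inv']
  -- det of the shear matrices
  have hJmul : (Matrix.fromBlocks 1 1 0 1 : Matrix (Fin N ⊕ Fin N) (Fin N ⊕ Fin N) ℂ) *
      Matrix.fromBlocks 1 0 (-1) 1 * Matrix.fromBlocks 1 1 0 1
      = Matrix.fromBlocks 0 1 (-1) 0 := by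
    simp [Matrix.fromBlocks_multiply]
  have hJdet : (Matrix.fromBlocks 0 1 (-1) 0 : Matrix (Fin N ⊕ Fin N) (Fin N ⊕ Fin N) ℂ).det
      = 1 := by
    rw [← hJmul, Matrix.det_mul, Matrix.det_mul]
    simp [Matrix.det_fromBlocks_zero₂₁, Matrix.det_fromBlocks_zero₁₂]
  have hGJ : G * Matrix.fromBlocks 0 1 (-1) 0
      = Matrix.fromBlocks (e • 1) Yᴴ (-Y) (e • 1) := by
    rw [hG, Matrix.fromBlocks_multiply]
    simp
  have hinv1 : ((e • 1 : Matrix (Fin N) (Fin N) ℂ))⁻¹ = e⁻¹ • 1 := by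
    apply Matrix.inv_eq_right_inv
    simp [Matrix.smul_mul, Matrix.mul_smul, smul_smul, mul_inv_cancel₀ he0, inv_mul_cancel₀ he0]
  haveI : Invertible (e • 1 : Matrix (Fin N) (Fin N) ℂ) :=
    invertibleOfRightInverse _ (e⁻¹ • 1) (by
      simp [Matrix.smul_mul, Matrix.mul_smul, smul_smul, mul_inv_cancel₀ he0, inv_mul_cancel₀ he0])
  have hcard : Fintype.card (Fin N) = N := Fintype.card_fin N
  have hGdet : G.det = B.det := by
    have h1 : G.det = (Matrix.fromBlocks (e • 1) Yᴴ (-Y) (e • 1) :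
        Matrix (Fin N ⊕ Fin N) (Fin N ⊕ Fin N) ℂ).det := by
      rw [← hGJ, Matrix.det_mul, hJdet, mul_one]
    rw [h1, Matrix.det_fromBlocks₁₁]
    have hio : (⅟(e • 1 : Matrix (Fin N) (Fin N) ℂ)) = e⁻¹ • 1 := by
      rw [Matrix.invOf_eq_nonsing_inv, hinv1]
    rw [hio]
    have h2 : (e • 1 : Matrix (Fin N) (Fin N) ℂ) - -Y * (e⁻¹ • 1) * Yᴴ = e⁻¹ • B := by
      rw [hB]
      rw [smul_add, smul_smul]
      have he2 : e⁻¹ * e ^ 2 = e := by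
        rw [sq, ← mul_assoc, inv_mul_cancel₀ he0, one_mul]
      rw [he2]
      simp [Matrix.neg_mul, Matrix.mul_smul, Matrix.smul_mul, sub_neg_eq_add, add_comm]
    rw [h2, Matrix.det_smul, Matrix.det_smul, Matrix.det_one, mul_one, hcard]
    rw [← mul_assoc, ← mul_pow, mul_inv_cancel₀ he0, one_pow, one_mul]
  have hABdet : A.det = B.det := by
    have h1 : A = (e ^ 2) • (((e ^ 2)⁻¹ • Yᴴ) * Y + 1) := by
      rw [hA, Matrix.smul_mul, smul_add, smul_smul, mul_inv_cancel₀ (pow_ne_zero 2 he0),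
        one_smul]
    have h2 : B = (e ^ 2) • (Y * ((e ^ 2)⁻¹ • Yᴴ) + 1) := by
      rw [hB, Matrix.mul_smul, smul_add, smul_smul, mul_inv_cancel₀ (pow_ne_zero 2 he0),
        one_smul]
    rw [h1, h2, Matrix.det_smul, Matrix.det_smul, Matrix.det_mul_add_one_comm]
  have hST : S.det = T.det := by
    have hsq : S.det * S.det = T.det * T.det := by
      have h1 : S.det * S.det = A.det := by rw [← Matrix.det_mul, hS2]
      have h2 : T.det * T.det = B.det := by rw [← Matrix.det_mul, hT2]
      rw [h1, h2, hABdet]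
    have hsum : S.det + T.det ≠ 0 := by
      have : (0 : ℂ) < S.det + T.det := add_pos hSdet hTdet
      exact this.ne'
    have hzero : (S.det - T.det) * (S.det + T.det) = 0 := by linear_combination hsq
    rcases mul_eq_zero.mp hzero with h | h
    · exact sub_eq_zero.mp h
    · exact absurd h hsum
  rw [Matrix.det_mul, hDdet, hGdet, ← hT2, Matrix.det_mul, hST]
  field_simp
end

section
/- Let N ≥ 1 and let X be an arbitrary N×N complex matrix. Let p₁ = a₁ + b₁j and p₂ = a₂ + b₂j be quaternions with b₁ ≠ 0 and b₂ ≠ 0. Then the quaternionic Green's functions satisfy the Lipschitz estimate |𝒢(p₁; X) − 𝒢(p₂; X)| ≤ |p₁ − p₂| / (|b₁|·|b₂|), where |·| denotes the quaternion norm. -/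
open MeasureTheory ProbabilityTheory Matrix Filter Topology
open scoped ComplexConjugate

namespace QGL
open Complex Matrix

def nsq {ι : Type*} [Fintype ι] (v : ι → ℂ) : ℝ := ∑ i, Complex.normSq (v i)

lemma nsq_nonneg {ι : Type*} [Fintype ι] (v : ι → ℂ) : 0 ≤ nsq v :=
  Finset.sum_nonneg fun _ _ => Complex.normSq_nonneg _

lemma nsq_pos {ι : Type*} [Fintype ι] {v : ι → ℂ} (hv : v ≠ 0) : 0 < nsq v := by
  obtain ⟨i, hi⟩ := Function.ne_iff.mp hv
  exact lt_of_lt_of_le (Complex.normSq_pos.mpr hi)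
    (Finset.single_le_sum (fun j _ => Complex.normSq_nonneg _) (Finset.mem_univ i))

lemma dotProduct_self_re {ι : Type*} [Fintype ι] (v : ι → ℂ) :
    (star v ⬝ᵥ v).re = nsq v := by
  simp [dotProduct, nsq, Complex.normSq_apply, Complex.re_sum]

lemma quad_eq {ι : Type*} [Fintype ι] (M : Matrix ι ι ℂ) (v : ι → ℂ) :
    nsq (M.mulVec v) = (star v ⬝ᵥ ((Mᴴ * M).mulVec v)).re := by
  rw [← dotProduct_self_re (M.mulVec v), Matrix.star_mulVec,
    Matrix.dotProduct_mulVec, Matrix.vecMul_vecMul, ← Matrix.dotProduct_mulVec]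

lemma nsq_mulVec_ge {ι : Type*} [Fintype ι] [DecidableEq ι] {M D : Matrix ι ι ℂ} {c : ℝ}
    (h : Mᴴ * M = Dᴴ * D + (c : ℂ) • 1) (v : ι → ℂ) :
    c * nsq v ≤ nsq (M.mulVec v) := by
  rw [quad_eq, h, Matrix.add_mulVec, Matrix.smul_mulVec, Matrix.one_mulVec,
    dotProduct_add, dotProduct_smul]
  have h1 : (star v ⬝ᵥ (Dᴴ * D).mulVec v).re = nsq (D.mulVec v) := (quad_eq D v).symm
  have h2 : ((c : ℂ) • (star v ⬝ᵥ v)).re = c * nsq v := by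
    simp [Complex.smul_re, dotProduct_self_re]
  rw [Complex.add_re, h1, h2]
  nlinarith [nsq_nonneg (D.mulVec v)]

lemma nsq_eq_mulVec {ι : Type*} [Fintype ι] [DecidableEq ι] {M : Matrix ι ι ℂ} {c : ℝ}
    (h : Mᴴ * M = (c : ℂ) • 1) (v : ι → ℂ) :
    nsq (M.mulVec v) = c * nsq v := by
  rw [quad_eq, h, Matrix.smul_mulVec, Matrix.one_mulVec, dotProduct_smul]
  simp [Complex.smul_re, dotProduct_self_re]

variable {N : ℕ}

lemma qmat_mul (p q : ℂ × ℂ) : qmat p * qmat q = qmat (qmul p q) := by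
  ext s t
  fin_cases s <;> fin_cases t <;>
    simp [qmat, qmul, Matrix.mul_apply, Fin.sum_univ_two, map_add, map_sub,
      _root_.map_mul] <;>
    ring_nf <;> simp [Complex.I_sq] <;> ring

lemma conjTranspose_dbl (Y : Matrix (Fin N) (Fin N) ℂ) : (dbl Y)ᴴ = dbl Yᴴ := by
  ext ⟨i, s⟩ ⟨j, t⟩
  fin_cases s <;> fin_cases t <;>
    simp [dbl, Matrix.conjTranspose_apply]

lemma transpose_dbl (Y : Matrix (Fin N) (Fin N) ℂ) : (dbl Y)ᵀ = dbl Yᵀ := by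
  ext ⟨i, s⟩ ⟨j, t⟩
  fin_cases s <;> fin_cases t <;> simp [dbl]

lemma qId_conjTranspose (p : ℂ × ℂ) :
    (qId (N := N) p)ᴴ = qId (conj p.1, -p.2) := by
  ext ⟨i, s⟩ ⟨j, t⟩
  by_cases hij : i = j
  · subst hij
    fin_cases s <;> fin_cases t <;>
      simp [qId, qmat, Matrix.conjTranspose_apply, apply_ite (starRingEnd ℂ),
        _root_.map_mul, Complex.conj_I, Complex.conj_conj] <;> ring
  · fin_cases s <;> fin_cases t <;>
      simp [qId, qmat, Matrix.conjTranspose_apply, hij, Ne.symm hij]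

lemma qId_transpose (p : ℂ × ℂ) :
    (qId (N := N) p)ᵀ = qId (p.1, conj p.2) := by
  ext ⟨i, s⟩ ⟨j, t⟩
  by_cases hij : i = j
  · subst hij
    fin_cases s <;> fin_cases t <;> simp [qId, qmat]
  · fin_cases s <;> fin_cases t <;> simp [qId, qmat, hij, Ne.symm hij]

lemma qId_sub (p q : ℂ × ℂ) : qId (N := N) p - qId q = qId (p - q) := by
  ext ⟨i, s⟩ ⟨j, t⟩
  by_cases hij : i = j
  · subst hij
    fin_cases s <;> fin_cases t <;> simp [qId, qmat, map_sub] <;> ring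
  · fin_cases s <;> fin_cases t <;> simp [qId, qmat, hij]

lemma qId_neg (b : ℂ) : qId (N := N) (0, -b) = -qId (0, b) := by
  ext ⟨i, s⟩ ⟨j, t⟩
  by_cases hij : i = j
  · subst hij
    fin_cases s <;> fin_cases t <;> simp [qId, qmat] <;> ring
  · fin_cases s <;> fin_cases t <;> simp [qId, qmat, hij]

lemma qId_real (r : ℝ) : qId (N := N) ((r : ℂ), 0) = (r : ℂ) • 1 := by
  ext ⟨i, s⟩ ⟨j, t⟩
  by_cases hij : i = j
  · subst hij
    fin_cases s <;> fin_cases t <;>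
      simp [qId, qmat, Matrix.one_apply, Prod.ext_iff, Complex.conj_ofReal]
  · fin_cases s <;> fin_cases t <;>
      simp [qId, qmat, Matrix.one_apply, Prod.ext_iff, hij]

lemma qId_mul_qId (p q : ℂ × ℂ) :
    qId (N := N) p * qId q = qId (qmul p q) := by
  ext ⟨i, s⟩ ⟨j, t⟩
  have h2 := congrFun (congrFun (qmat_mul p q) s) t
  simp only [Matrix.mul_apply, Fin.sum_univ_two] at h2
  simp only [Matrix.mul_apply, qId, Matrix.of_apply, Fintype.sum_prod_type,
    Fin.sum_univ_two, ite_mul, mul_ite, zero_mul, mul_zero]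
  by_cases hij : i = j
  · subst hij
    rw [Finset.sum_eq_single i]
    · simp [h2]
    · intro k _ hk; simp [Ne.symm hk, hk]
    · simp
  · rw [Finset.sum_eq_zero]
    · simp [hij]
    · intro k _
      by_cases hik : i = k
      · subst hik; simp [hij]
      · simp [hik]

lemma decomp (X : Matrix (Fin N) (Fin N) ℂ) (p : ℂ × ℂ) :
    dbl X - qId p = dbl (X - p.1 • 1) - qId (0, p.2) := by
  ext ⟨i, s⟩ ⟨j, t⟩
  by_cases hij : i = j
  · subst hij
    fin_cases s <;> fin_cases t <;>
      simp [dbl, qId, qmat, Matrix.one_apply, map_sub, _root_.map_mul,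
        Complex.conj_ofReal, apply_ite (starRingEnd ℂ)] <;> ring
  · fin_cases s <;> fin_cases t <;>
      simp [dbl, qId, qmat, Matrix.one_apply, map_sub, _root_.map_mul, hij,
        Ne.symm hij, Complex.conj_ofReal, apply_ite (starRingEnd ℂ)]

lemma dbl_mul_qId (Z : Matrix (Fin N) (Fin N) ℂ) (b : ℂ) :
    dbl Z * qId (0, b) = qId (0, b) * dbl Zᴴ := by
  ext ⟨i, s⟩ ⟨j, t⟩
  simp only [Matrix.mul_apply, Fintype.sum_prod_type, Fin.sum_univ_two,
    dbl, qId, qmat, Matrix.of_apply, Matrix.conjTranspose_apply]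
  fin_cases s <;> fin_cases t <;>
    simp [Finset.sum_ite_eq, Finset.sum_ite_eq', eq_comm] <;> ring

variable {N : ℕ}

lemma keyId (Y : Matrix (Fin N) (Fin N) ℂ) (b : ℂ) :
    (dbl Y - qId (0, b))ᴴ * (dbl Y - qId (0, b))
      = (dbl Y)ᴴ * dbl Y + ((Complex.normSq b : ℝ) : ℂ) • 1 := by
  rw [Matrix.conjTranspose_sub, conjTranspose_dbl, qId_conjTranspose]
  have h1 : qId (N := N) ((starRingEnd ℂ) (0 : ℂ), -b) = qId (0, -b) := by norm_num
  rw [h1, qId_neg, Matrix.sub_mul, Matrix.mul_sub, Matrix.mul_sub]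
  rw [dbl_mul_qId Yᴴ b, Matrix.conjTranspose_conjTranspose]
  have h2 : qId (N := N) (0, b) * dbl Y = dbl Yᴴ * qId (0, b) := by
    have := dbl_mul_qId (N := N) Yᴴ b
    rw [Matrix.conjTranspose_conjTranspose] at this
    exact this.symm
  have h3 : qId (N := N) (0, b) * qId (0, b) = (-(Complex.normSq b : ℝ) : ℂ) • 1 := by
    rw [qId_mul_qId]
    have : qmul (0, b) (0, b) = ((-(Complex.normSq b : ℝ) : ℂ), 0) := by
      simp [qmul, Complex.mul_conj]
    rw [this]
    have := qId_real (N := N) (-(Complex.normSq b))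
    push_cast at this ⊢
    rw [this]
  rw [Matrix.neg_mul, Matrix.neg_mul, h2, h3]
  module

lemma qId_H_mul (p : ℂ × ℂ) :
    (qId (N := N) p)ᴴ * qId p
      = ((Complex.normSq p.1 + Complex.normSq p.2 : ℝ) : ℂ) • 1 := by
  rw [qId_conjTranspose, qId_mul_qId]
  have : qmul ((starRingEnd ℂ) p.1, -p.2) p
      = (((Complex.normSq p.1 + Complex.normSq p.2 : ℝ) : ℂ), 0) := by
    simp only [qmul, Prod.mk.injEq]
    constructor
    · push_cast
      rw [Complex.normSq_eq_conj_mul_self, Complex.normSq_eq_conj_mul_self]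
      ring
    · ring
  rw [this]
  have := qId_real (N := N) (Complex.normSq p.1 + Complex.normSq p.2)
  push_cast at this ⊢
  rw [this]

/-- Lower bound for `dbl Y - qId (0,b)` acting by `mulVec`. -/
lemma lower_bound (Y : Matrix (Fin N) (Fin N) ℂ) (b : ℂ) (v : Fin N × Fin 2 → ℂ) :
    Complex.normSq b * nsq v ≤ nsq ((dbl Y - qId (0, b)).mulVec v) :=
  nsq_mulVec_ge (keyId Y b) v

/-- Invertibility. -/
lemma isUnit_det (Y : Matrix (Fin N) (Fin N) ℂ) {b : ℂ} (hb : b ≠ 0) :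
    IsUnit (dbl Y - qId (0, b)).det := by
  rw [isUnit_iff_ne_zero]
  intro h0
  obtain ⟨v, hv, hMv⟩ := (Matrix.exists_mulVec_eq_zero_iff).mpr h0
  have h1 := lower_bound Y b v
  rw [hMv] at h1
  have h2 : nsq (0 : Fin N × Fin 2 → ℂ) = 0 := by simp [nsq]
  rw [h2] at h1
  nlinarith [nsq_pos hv, Complex.normSq_pos.mpr hb]

/-- Upper bound for the inverse. -/
lemma inv_bound (Y : Matrix (Fin N) (Fin N) ℂ) {b : ℂ} (hb : b ≠ 0)
    (x : Fin N × Fin 2 → ℂ) :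
    nsq ((dbl Y - qId (0, b))⁻¹.mulVec x) ≤ (Complex.normSq b)⁻¹ * nsq x := by
  set M := dbl Y - qId (0, b)
  set y := M⁻¹.mulVec x
  have hMy : M.mulVec y = x := by
    rw [Matrix.mulVec_mulVec, Matrix.mul_nonsing_inv _ (isUnit_det Y hb),
      Matrix.one_mulVec]
  have h1 := lower_bound Y b y
  rw [hMy] at h1
  have hpos : 0 < Complex.normSq b := Complex.normSq_pos.mpr hb
  rw [le_inv_mul_iff₀ hpos] at *
  linarith


lemma nsq_single {ι : Type*} [Fintype ι] [DecidableEq ι] (r : ι) :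
    nsq (Pi.single r (1 : ℂ)) = 1 := by
  simp [nsq, Pi.single_apply, apply_ite Complex.normSq]

lemma conj_ne_zero' {z : ℂ} (hz : z ≠ 0) : (starRingEnd ℂ) z ≠ 0 := by
  simpa using hz


end QGL

/-- **Lipschitz estimate for the quaternionic Green's function:**
`|𝒢(p₁; X) − 𝒢(p₂; X)| ≤ |p₁ − p₂| / (|b₁|·|b₂|)` for quaternions `pₖ = aₖ + bₖj`
with nonzero hypercomplex parts. -/
theorem qgreen_lipschitz
    (N : ℕ) (hN : 1 ≤ N) (X : Matrix (Fin N) (Fin N) ℂ)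
    (p₁ p₂ : ℂ × ℂ) (h₁ : p₁.2 ≠ 0) (h₂ : p₂.2 ≠ 0) :
    qnorm (qGreen p₁ X - qGreen p₂ X)
      ≤ qnorm (p₁ - p₂) / (‖p₁.2‖ * ‖p₂.2‖) := by
  classical
  set Δ : ℂ × ℂ := p₁ - p₂ with hΔ
  set M₁ := dbl X - qId (N := N) p₁ with hM₁
  set M₂ := dbl X - qId (N := N) p₂ with hM₂
  set Q := qId (N := N) Δ with hQdef
  set T := M₁⁻¹ * Q * M₂⁻¹ with hTdef
  have hd₁ : M₁ = dbl (X - p₁.1 • 1) - qId (0, p₁.2) := QGL.decomp X p₁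
  have hd₂ : M₂ = dbl (X - p₂.1 • 1) - qId (0, p₂.2) := QGL.decomp X p₂
  have hdet₁ : IsUnit M₁.det := by rw [hd₁]; exact QGL.isUnit_det _ h₁
  have hdet₂ : IsUnit M₂.det := by rw [hd₂]; exact QGL.isUnit_det _ h₂
  -- resolvent identity
  have hQ' : Q = M₂ - M₁ := by
    rw [hQdef, hΔ, ← QGL.qId_sub, hM₁, hM₂]; abel
  have hsub : M₁⁻¹ - M₂⁻¹ = T := by
    rw [hTdef, hQ', Matrix.mul_sub, Matrix.nonsing_inv_mul _ hdet₁, Matrix.sub_mul,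
      Matrix.mul_assoc, Matrix.mul_nonsing_inv _ hdet₂, Matrix.mul_one,
      Matrix.one_mul]
  -- transposed decompositions
  have hdt₁ : M₁ᵀ = dbl (Xᵀ - p₁.1 • 1) - qId (0, (starRingEnd ℂ) p₁.2) := by
    rw [hM₁, Matrix.transpose_sub, QGL.transpose_dbl, QGL.qId_transpose]
    exact QGL.decomp Xᵀ (p₁.1, (starRingEnd ℂ) p₁.2)
  have hdt₂ : M₂ᵀ = dbl (Xᵀ - p₂.1 • 1) - qId (0, (starRingEnd ℂ) p₂.2) := by
    rw [hM₂, Matrix.transpose_sub, QGL.transpose_dbl, QGL.qId_transpose]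
    exact QGL.decomp Xᵀ (p₂.1, (starRingEnd ℂ) p₂.2)
  -- rows of T
  set u : Fin N → (Fin N × Fin 2 → ℂ) := fun i => fun s => T (i, 0) s with hu
  have hu_eq : ∀ i, u i = M₂ᵀ⁻¹.mulVec (Qᵀ.mulVec (M₁ᵀ⁻¹.mulVec
      (Pi.single ((i, 0) : Fin N × Fin 2) (1 : ℂ)))) := by
    intro i
    have h1 : u i = Tᵀ.mulVec (Pi.single ((i, 0) : Fin N × Fin 2) (1 : ℂ)) := by
      funext s
      simp [hu, Matrix.mulVec_single, Matrix.transpose_apply]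
    rw [h1, hTdef, Matrix.transpose_mul, Matrix.transpose_mul,
      Matrix.transpose_nonsing_inv, Matrix.transpose_nonsing_inv,
      ← Matrix.mulVec_mulVec, ← Matrix.mulVec_mulVec]
  -- norm bound on rows
  have hrow : ∀ i, QGL.nsq (u i)
      ≤ (Complex.normSq p₂.2)⁻¹ *
        ((Complex.normSq Δ.1 + Complex.normSq Δ.2) * (Complex.normSq p₁.2)⁻¹) := by
    intro i
    rw [hu_eq i]
    have b1 : QGL.nsq (M₁ᵀ⁻¹.mulVec (Pi.single ((i, 0) : Fin N × Fin 2) (1 : ℂ)))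
        ≤ (Complex.normSq p₁.2)⁻¹ := by
      have h := QGL.inv_bound (Xᵀ - p₁.1 • 1) (QGL.conj_ne_zero' h₁)
        (Pi.single ((i, 0) : Fin N × Fin 2) (1 : ℂ))
      rw [QGL.nsq_single, mul_one, Complex.normSq_conj] at h
      rw [hdt₁]
      exact h
    have b2 : ∀ y, QGL.nsq (Qᵀ.mulVec y)
        = (Complex.normSq Δ.1 + Complex.normSq Δ.2) * QGL.nsq y := by
      intro y
      rw [hQdef, QGL.qId_transpose]
      have h := QGL.nsq_eq_mulVec (QGL.qId_H_mul (N := N) (Δ.1, (starRingEnd ℂ) Δ.2)) y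
      rw [Complex.normSq_conj] at h
      exact h
    have b3 : ∀ z, QGL.nsq (M₂ᵀ⁻¹.mulVec z)
        ≤ (Complex.normSq p₂.2)⁻¹ * QGL.nsq z := by
      intro z
      have h := QGL.inv_bound (Xᵀ - p₂.1 • 1) (QGL.conj_ne_zero' h₂) z
      rw [Complex.normSq_conj] at h
      rw [hdt₂]
      exact h
    calc QGL.nsq (M₂ᵀ⁻¹.mulVec (Qᵀ.mulVec (M₁ᵀ⁻¹.mulVec _)))
        ≤ (Complex.normSq p₂.2)⁻¹ * QGL.nsq (Qᵀ.mulVec (M₁ᵀ⁻¹.mulVec _)) := b3 _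
      _ = (Complex.normSq p₂.2)⁻¹ *
          ((Complex.normSq Δ.1 + Complex.normSq Δ.2) * QGL.nsq (M₁ᵀ⁻¹.mulVec _)) := by
            rw [b2]
      _ ≤ (Complex.normSq p₂.2)⁻¹ *
          ((Complex.normSq Δ.1 + Complex.normSq Δ.2) * (Complex.normSq p₁.2)⁻¹) := by
            have h0 : (0:ℝ) ≤ (Complex.normSq p₂.2)⁻¹ :=
              inv_nonneg.mpr (Complex.normSq_nonneg _)
            have h0' : (0:ℝ) ≤ Complex.normSq Δ.1 + Complex.normSq Δ.2 :=
              add_nonneg (Complex.normSq_nonneg _) (Complex.normSq_nonneg _)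
            exact mul_le_mul_of_nonneg_left
              (mul_le_mul_of_nonneg_left b1 h0') h0
  have hLnn : (0:ℝ) ≤ qnorm Δ / (‖p₁.2‖ * ‖p₂.2‖) :=
    div_nonneg (Real.sqrt_nonneg _)
      (mul_nonneg (norm_nonneg _) (norm_nonneg _))
  have hLsq : (Complex.normSq p₂.2)⁻¹ *
        ((Complex.normSq Δ.1 + Complex.normSq Δ.2) * (Complex.normSq p₁.2)⁻¹)
      = (qnorm Δ / (‖p₁.2‖ * ‖p₂.2‖)) ^ 2 := by
    rw [div_pow, qnorm, Real.sq_sqrt (by positivity), mul_pow,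
      Complex.sq_norm, Complex.sq_norm, Complex.sq_norm, Complex.sq_norm]
    rw [div_eq_mul_inv, mul_inv]
    ring
  -- Green's function difference entries
  have hTe : ∀ r s : Fin N × Fin 2, M₁⁻¹ r s - M₂⁻¹ r s = T r s := by
    intro r s
    rw [← hsub, Matrix.sub_apply]
  have hG1 : (qGreen p₁ X - qGreen p₂ X).1
      = (N : ℂ)⁻¹ * ∑ i : Fin N, T (i, 0) (i, 0) := by
    simp only [qGreen, Prod.fst_sub, ← hM₁, ← hM₂]
    rw [← mul_sub, ← Finset.sum_sub_distrib]
    simp only [hTe]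
  have hG2 : (qGreen p₁ X - qGreen p₂ X).2
      = -Complex.I * ((N : ℂ)⁻¹ * ∑ i : Fin N, T (i, 0) (i, 1)) := by
    simp only [qGreen, Prod.snd_sub, ← hM₁, ← hM₂]
    rw [← mul_sub, ← mul_sub, ← Finset.sum_sub_distrib]
    simp only [hTe]
  -- vectors in ℂ²
  set w : Fin N → EuclideanSpace ℂ (Fin 2) := fun i =>
    WithLp.toLp 2 ![(N : ℂ)⁻¹ * T (i, 0) (i, 0), -Complex.I * ((N : ℂ)⁻¹ * T (i, 0) (i, 1))] with hw
  have hqnorm_eq : qnorm (qGreen p₁ X - qGreen p₂ X) = ‖∑ i : Fin N, w i‖ := by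
    rw [EuclideanSpace.norm_eq, qnorm, hG1, hG2, Fin.sum_univ_two]
    have e0 : (∑ i : Fin N, w i) 0 = (N : ℂ)⁻¹ * ∑ i : Fin N, T (i, 0) (i, 0) := by
      rw [WithLp.ofLp_sum, Finset.sum_apply, Finset.mul_sum]
      refine Finset.sum_congr rfl fun i _ => ?_
      simp [hw]
    have e1 : (∑ i : Fin N, w i) 1
        = -Complex.I * ((N : ℂ)⁻¹ * ∑ i : Fin N, T (i, 0) (i, 1)) := by
      rw [WithLp.ofLp_sum, Finset.sum_apply, Finset.mul_sum, Finset.mul_sum]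
      refine Finset.sum_congr rfl fun i _ => ?_
      simp [hw]
    rw [e0, e1]
  -- per-vector bound
  have hwib : ∀ i : Fin N, ‖w i‖
      ≤ (N : ℝ)⁻¹ * (qnorm Δ / (‖p₁.2‖ * ‖p₂.2‖)) := by
    intro i
    have hpair : Complex.normSq (T (i, 0) (i, 0)) + Complex.normSq (T (i, 0) (i, 1))
        ≤ QGL.nsq (u i) := by
      have hterm : ∀ k : Fin N, (0:ℝ) ≤ ∑ t : Fin 2, Complex.normSq (u i (k, t)) :=
        fun k => Finset.sum_nonneg fun _ _ => Complex.normSq_nonneg _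
      calc Complex.normSq (T (i, 0) (i, 0)) + Complex.normSq (T (i, 0) (i, 1))
          = ∑ t : Fin 2, Complex.normSq (u i (i, t)) := by
            rw [Fin.sum_univ_two]
        _ ≤ ∑ k : Fin N, ∑ t : Fin 2, Complex.normSq (u i (k, t)) :=
            Finset.single_le_sum
              (f := fun k => ∑ t : Fin 2, Complex.normSq (u i (k, t)))
              (fun k _ => hterm k) (Finset.mem_univ i)
        _ = QGL.nsq (u i) := by rw [QGL.nsq, Fintype.sum_prod_type]
    have hnormw : ‖w i‖ ^ 2
        ≤ ((N : ℝ)⁻¹ * (qnorm Δ / (‖p₁.2‖ * ‖p₂.2‖))) ^ 2 := by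
      rw [EuclideanSpace.norm_eq, Real.sq_sqrt (Finset.sum_nonneg fun _ _ => by positivity),
        Fin.sum_univ_two]
      have c0 : ‖w i 0‖ ^ 2 = ((N:ℝ)⁻¹) ^ 2 * Complex.normSq (T (i, 0) (i, 0)) := by
        simp only [hw, PiLp.toLp_apply, Matrix.cons_val_zero, norm_mul]
        rw [mul_pow, Complex.sq_norm, Complex.sq_norm]
        congr 1
        rw [map_inv₀, Complex.normSq_natCast]
        push_cast
        rw [sq]
        field_simp
      have c1 : ‖w i 1‖ ^ 2 = ((N:ℝ)⁻¹) ^ 2 * Complex.normSq (T (i, 0) (i, 1)) := by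
        simp only [hw, Matrix.cons_val_one, Matrix.head_cons, PiLp.toLp_apply, Matrix.cons_val_zero, norm_mul]
        rw [mul_pow, mul_pow, Complex.sq_norm, Complex.sq_norm, Complex.sq_norm]
        have : Complex.normSq (-Complex.I) = 1 := by simp
        rw [this, one_mul]
        congr 1
        rw [Complex.normSq_inv, Complex.normSq_natCast]
        push_cast
        rw [sq]
        field_simp
      rw [c0, c1, ← mul_add, mul_pow]
      have h2 : Complex.normSq (T (i, 0) (i, 0)) + Complex.normSq (T (i, 0) (i, 1))
          ≤ (qnorm Δ / (‖p₁.2‖ * ‖p₂.2‖)) ^ 2 :=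
        le_trans (le_trans hpair (hrow i)) (le_of_eq hLsq)
      exact mul_le_mul_of_nonneg_left h2 (by positivity)
    calc ‖w i‖ = Real.sqrt (‖w i‖ ^ 2) := (Real.sqrt_sq (norm_nonneg _)).symm
      _ ≤ Real.sqrt (((N : ℝ)⁻¹ * (qnorm Δ / (‖p₁.2‖ * ‖p₂.2‖))) ^ 2) :=
          Real.sqrt_le_sqrt hnormw
      _ = (N : ℝ)⁻¹ * (qnorm Δ / (‖p₁.2‖ * ‖p₂.2‖)) :=
          Real.sqrt_sq (by positivity)
  -- assemble
  have hNne : (N : ℝ) ≠ 0 := by positivity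
  calc qnorm (qGreen p₁ X - qGreen p₂ X) = ‖∑ i : Fin N, w i‖ := hqnorm_eq
    _ ≤ ∑ i : Fin N, ‖w i‖ := norm_sum_le _ _
    _ ≤ ∑ _i : Fin N,
        (N : ℝ)⁻¹ * (qnorm Δ / (‖p₁.2‖ * ‖p₂.2‖)) :=
          Finset.sum_le_sum fun i _ => hwib i
    _ = qnorm Δ / (‖p₁.2‖ * ‖p₂.2‖) := by
          rw [Finset.sum_const, Finset.card_univ, Fintype.card_fin, nsmul_eq_mul,
            ← mul_assoc, mul_inv_cancel₀ hNne, one_mul]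
end
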